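/- Φ_{u_M}^{−1}((τ_i)_{i≥1}) = (λ_i)_{i≥1} (equivalently, the induced map sends the Komornik–Loreti constant for alphabet {0,…,M} to the Komornik–Loreti constant for alphabet {0,1}). Moreover, for every n ≥ 1, Φ_{u_M}^{−1}(α*(q_n'(1))) = α(q_{n+1}'(M)), where α*(q_n'(1)) = τ_1…τ_{2^{n−1}}(overline(τ_1…τ_{2^{n−1}})⁺)^∞ with reflection taken over the alphabet {0,1}. -/

import Mathlib

open Filter Set

/-- Strict lexicographic order on digit sequences (0-indexed). -/
def seqLt (x y : ℕ → ℕ) : Prop := ∃ n, (∀ i < n, x i = y i) ∧ x n < y n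

/-- Weak lexicographic order on digit sequences. -/
def seqLe (x y : ℕ → ℕ) : Prop := seqLt x y ∨ x = y

/-- The sequence w0^∞ associated with a finite word. -/
def wordSeq (w : List ℕ) : ℕ → ℕ := fun i => w.getD i 0

/-- Words are compared via w ↦ w0^∞. -/
def wordLt (u v : List ℕ) : Prop := seqLt (wordSeq u) (wordSeq v)

def wordLe (u v : List ℕ) : Prop := seqLe (wordSeq u) (wordSeq v)

/-- Reflection of a sequence: each digit c is replaced by M - c. -/
def reflSeq (M : ℕ) (x : ℕ → ℕ) : ℕ → ℕ := fun i => M - x i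

/-- Reflection of a word. -/
def reflW (M : ℕ) (w : List ℕ) : List ℕ := w.map (fun c => M - c)

/-- w⁺ : add one to the last digit. -/
def wplus (w : List ℕ) : List ℕ := w.dropLast ++ [w.getLast! + 1]

/-- w⁻ : subtract one from the last digit. -/
def wminus (w : List ℕ) : List ℕ := w.dropLast ++ [w.getLast! - 1]

/-- n-fold left shift σⁿ. -/
def shiftn (x : ℕ → ℕ) (n : ℕ) : ℕ → ℕ := fun i => x (n + i)

/-- The prefix of length n of a sequence, as a word. -/
def pref (x : ℕ → ℕ) (n : ℕ) : List ℕ := (List.range n).map x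

/-- The periodic sequence w^∞. -/
def periodic (w : List ℕ) : ℕ → ℕ := fun i => w.getD (i % w.length) 0

/-- The eventually periodic sequence u v^∞. -/
def wordThenPer (u v : List ℕ) : ℕ → ℕ :=
  fun i => if i < u.length then u.getD i 0 else v.getD ((i - u.length) % v.length) 0

/-- A fundamental word over the alphabet {0,…,M}. -/
def IsFundamental (M : ℕ) (a : List ℕ) : Prop :=
  (∀ d ∈ a, d ≤ M) ∧
  ((a.length = 1 ∧ 2 ≤ M ∧ M - a.head! ≤ a.head! ∧ a.head! < M) ∨
   (2 ≤ a.length ∧ ∀ i, 1 ≤ i → i < a.length →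
     wordLe (reflW M (a.take (a.length - i))) (a.drop i) ∧
     wordLt (a.drop i) (a.take (a.length - i))))

/-- The block emitted by the two-state automaton computing Φ_a⁻¹, as a function of the previous
bit (`0` at the start, so that the automaton is in state A after a `1` and in state B after
a `0`) and the current bit: (1,1) ↦ overline(a), (1,0) ↦ overline(a⁺), (0,1) ↦ a⁺, (0,0) ↦ a. -/
def block (M : ℕ) (a : List ℕ) (prev cur : ℕ) : List ℕ :=
  if prev = 1 then (if cur = 1 then reflW M a else reflW M (wplus a))
  else (if cur = 1 then wplus a else a)

/-- Φ_a⁻¹ applied to a finite {0,1}-word b (whose first digit should be 1):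
the concatenation of the blocks emitted by the automaton. -/
def phiInv (M : ℕ) (a : List ℕ) (b : List ℕ) : List ℕ :=
  (List.range b.length).flatMap
    (fun i => block M a (if i = 0 then 0 else b.getD (i - 1) 0) (b.getD i 0))

/-- Φ_a⁻¹ applied to an infinite {0,1}-sequence b (whose first digit should be 1). -/
def phiInvSeq (M : ℕ) (a : List ℕ) (b : ℕ → ℕ) : ℕ → ℕ :=
  fun j =>
    (block M a (if j / a.length = 0 then 0 else b (j / a.length - 1)) (b (j / a.length))).getD
      (j % a.length) 0

/-- The set V = {x ∈ Ω_M : overline(x) ≼ σⁿ(x) ≼ x for all n ≥ 0}. -/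
def Vset (M : ℕ) : Set (ℕ → ℕ) :=
  {x | (∀ i, x i ≤ M) ∧ ∀ n, seqLe (reflSeq M x) (shiftn x n) ∧ seqLe (shiftn x n) x}

/-- An irreducible sequence (a_i) ∈ V: whenever a_j > 0 and (a_1…a_j⁻)^∞ ∈ V, one has
a_1…a_j(overline(a_1…a_j)⁺)^∞ ≺ (a_i). -/
def IrreducibleSeq (M : ℕ) (x : ℕ → ℕ) : Prop :=
  x ∈ Vset M ∧
  ∀ j, 1 ≤ j → 0 < x (j - 1) → periodic (wminus (pref x j)) ∈ Vset M →
    seqLt (wordThenPer (pref x j) (wplus (reflW M (pref x j)))) x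

/-- An irreducible fundamental word: one that is not a composition c∘d with c ∈ A_M, d ∈ A_1. -/
def IrreducibleWord (M : ℕ) (a : List ℕ) : Prop :=
  IsFundamental M a ∧
  ¬∃ c d : List ℕ, IsFundamental M c ∧ IsFundamental 1 d ∧ a = phiInv M c d

/-- a is the quasi-greedy q-expansion of 1 over alphabet {0,…,M}: the lexicographically largest
sequence with digits ≤ M, not ending in 0^∞, with Σ a_i q^{-i} = 1. -/
def isQuasiGreedy (M : ℕ) (q : ℝ) (a : ℕ → ℕ) : Prop :=
  (∀ i, a i ≤ M) ∧ (∀ N, ∃ i, N ≤ i ∧ a i ≠ 0) ∧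
  (∑' i : ℕ, (a i : ℝ) / q ^ (i + 1)) = 1 ∧
  ∀ b : ℕ → ℕ, (∀ i, b i ≤ M) → (∀ N, ∃ i, N ≤ i ∧ b i ≠ 0) →
    (∑' i : ℕ, (b i : ℝ) / q ^ (i + 1)) = 1 → seqLe b a

open Classical in
/-- The quasi-greedy expansion α(q) (well defined for q ∈ (1, M+1]). -/
noncomputable def alphaF (M : ℕ) (q : ℝ) : ℕ → ℕ :=
  if h : ∃ a, isQuasiGreedy M q a then h.choose else fun _ => 0

/-- The shifted Thue–Morse sequence: τ_i = (sum of binary digits of i) mod 2, τ_0 = 0. -/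
def tau (i : ℕ) : ℕ := (Nat.digits 2 i).sum % 2

/-- λ_i = k + τ_i - τ_{i-1} if M = 2k, and k + τ_i if M = 2k+1. -/
def lam (M i : ℕ) : ℕ := if M % 2 = 0 then M / 2 + tau i - tau (i - 1) else M / 2 + tau i

/-- The sequence (λ_i)_{i≥1} = α(q_KL), 0-indexed. -/
def lamSeq (M : ℕ) : ℕ → ℕ := fun n => lam M (n + 1)

/-- The sequence (τ_i)_{i≥1}, 0-indexed. -/
def tauSeq : ℕ → ℕ := fun n => tau (n + 1)

/-- The unit lift u_M: the word k if M = 2k, and (k+1)k if M = 2k+1. -/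
def unitLift (M : ℕ) : List ℕ := if M % 2 = 0 then [M / 2] else [M / 2 + 1, M / 2]

/-- α(q_n') = λ_1…λ_{2^{n-1}}(overline(λ_1…λ_{2^{n-1}})⁺)^∞ for M even, and
λ_1…λ_{2^n}(overline(λ_1…λ_{2^n})⁺)^∞ for M odd (n ≥ 1). -/
def alphaQn (M n : ℕ) : ℕ → ℕ :=
  wordThenPer (pref (lamSeq M) (if M % 2 = 0 then 2 ^ (n - 1) else 2 ^ n))
    (wplus (reflW M (pref (lamSeq M) (if M % 2 = 0 then 2 ^ (n - 1) else 2 ^ n))))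

/-- Ũ_q = {x ∈ Ω_M : overline(α(q)) ≺ σⁿ(x) ≺ α(q) for all n ≥ 0}. -/
def Utilde (M : ℕ) (q : ℝ) : Set (ℕ → ℕ) :=
  {x | (∀ i, x i ≤ M) ∧
    ∀ n, seqLt (reflSeq M (alphaF M q)) (shiftn x n) ∧ seqLt (shiftn x n) (alphaF M q)}

/-- V_q = {x ∈ Ω_M : overline(α(q)) ≼ σⁿ(x) ≼ α(q) for all n ≥ 0}. -/
def VqSet (M : ℕ) (q : ℝ) : Set (ℕ → ℕ) :=
  {x | (∀ i, x i ≤ M) ∧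
    ∀ n, seqLe (reflSeq M (alphaF M q)) (shiftn x n) ∧ seqLe (shiftn x n) (alphaF M q)}

/-- B_n(X): the set of length-n prefixes of sequences in X. -/
def prefixSet (X : Set (ℕ → ℕ)) (n : ℕ) : Set (List ℕ) := (fun x => pref x n) '' X

/-- Topological entropy h(X) = lim (log #B_n(X))/n (the limit exists for shift-invariant X,
in which case it coincides with the limsup used here). -/
noncomputable def entropyOf (X : Set (ℕ → ℕ)) : ℝ :=
  Filter.atTop.limsup fun n : ℕ => Real.log (Nat.card ↥(prefixSet X n)) / n

/-- The entropy function H(q) = h(Ũ_q). -/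
noncomputable def Hent (M : ℕ) (q : ℝ) : ℝ := entropyOf (Utilde M q)

/-- c_M = 1 for even M, 1/2 for odd M. -/
noncomputable def cM (M : ℕ) : ℝ := if M % 2 = 0 then 1 else 1 / 2

/-- The fundamental interval J_a = [q_L(a), q_R(a)], described via the characterizations
α(q_L(a)) = a^∞ and α(q_R(a)) = a⁺(overline(a))^∞. -/
def Jset (M : ℕ) (a : List ℕ) : Set ℝ :=
  {q | ∃ qL qR : ℝ, qL ∈ Set.Ioc (1:ℝ) ((M:ℝ)+1) ∧ qR ∈ Set.Ioc (1:ℝ) ((M:ℝ)+1) ∧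
    alphaF M qL = periodic a ∧ alphaF M qR = wordThenPer (wplus a) (reflW M a) ∧
    q ∈ Set.Icc qL qR}

/-- The word w occurs (as a factor) in some sequence of X. -/
def occursIn (w : List ℕ) (X : Set (ℕ → ℕ)) : Prop :=
  ∃ x ∈ X, ∃ k, ∀ i < w.length, x (k + i) = w.getD i 0

/-- [pL, pR] is an entropy plateau: a maximal interval in (1, M+1] on which H is positive
and constant. -/
def IsPlateau (M : ℕ) (pL pR : ℝ) : Prop :=
  pL ≤ pR ∧ Set.Icc pL pR ⊆ Set.Ioc 1 ((M:ℝ)+1) ∧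
  (∀ q ∈ Set.Icc pL pR, 0 < Hent M q ∧ Hent M q = Hent M pL) ∧
  ∀ S : Set ℝ, S.OrdConnected → S ⊆ Set.Ioc 1 ((M:ℝ)+1) →
    (∀ q ∈ S, 0 < Hent M q) → (∀ q ∈ S, ∀ q' ∈ S, Hent M q = Hent M q') →
    Set.Icc pL pR ⊆ S → S = Set.Icc pL pR

/-- An n-irreducible word (n ≥ 1): a = u_M ∘ (10)^{∘(n-1)} ∘ b with b ∈ A_1 irreducible. -/
def nIrreducibleWord (M n : ℕ) (a : List ℕ) : Prop :=
  ∃ b : List ℕ, IrreducibleWord 1 b ∧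
    a = phiInv M ((fun w => phiInv M w [1, 0])^[n - 1] (unitLift M)) b


/-! ### Auxiliary lemmas -/

lemma tau_le (i : ℕ) : tau i ≤ 1 := Nat.lt_succ_iff.mp (Nat.mod_lt _ (by norm_num))
lemma tau_zero : tau 0 = 0 := by simp [tau]
lemma tau_one : tau 1 = 1 := by simp [tau]
lemma tau_two_mul (m : ℕ) : tau (2*m) = tau m := by
  rcases Nat.eq_zero_or_pos m with h|h
  · simp [h]
  · unfold tau
    rw [Nat.digits_def' (by norm_num : 1 < 2) (by omega)]
    simp [Nat.mul_div_cancel_left, Nat.mul_mod_right]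
lemma tau_two_mul_add_one (m : ℕ) : tau (2*m+1) = 1 - tau m := by
  unfold tau
  rw [Nat.digits_def' (by norm_num : 1 < 2) (by omega)]
  have h1 : (2*m+1) % 2 = 1 := by omega
  have h2 : (2*m+1) / 2 = m := by omega
  rw [h1, h2]
  simp only [List.sum_cons]
  omega
lemma tau_pow (n : ℕ) : tau (2^n) = 1 := by
  induction n with
  | zero => exact tau_one
  | succ n ih => rw [pow_succ, mul_comm, tau_two_mul, ih]

lemma pref_length (x : ℕ → ℕ) (n : ℕ) : (pref x n).length = n := by simp [pref]
lemma pref_getD (x : ℕ → ℕ) {i n : ℕ} (h : i < n) : (pref x n).getD i 0 = x i := by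
  simp [pref, List.getD_eq_getElem?_getD, h]
lemma pref_ne_nil (x : ℕ → ℕ) {n : ℕ} (h : 0 < n) : pref x n ≠ [] := by
  intro hc
  have := pref_length x n
  rw [hc] at this
  simp at this
  omega
lemma reflW_length (M : ℕ) (w : List ℕ) : (reflW M w).length = w.length := by simp [reflW]
lemma reflW_ne_nil (M : ℕ) {w : List ℕ} (h : w ≠ []) : reflW M w ≠ [] := by
  intro hc
  have := reflW_length M w
  rw [hc] at this
  simp at this
  exact h (List.length_eq_zero_iff.mp this.symm)
lemma reflW_getD (M : ℕ) (w : List ℕ) {i : ℕ} (h : i < w.length) :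
    (reflW M w).getD i 0 = M - w.getD i 0 := by
  rw [List.getD_eq_getElem _ _ (by simpa [reflW] using h), List.getD_eq_getElem _ _ h]
  simp [reflW]
lemma wplus_length (w : List ℕ) (h : w ≠ []) : (wplus w).length = w.length := by
  have := List.length_pos_iff.mpr h
  simp [wplus]; omega
lemma getLast!_eq_getD (w : List ℕ) (h : w ≠ []) : w.getLast! = w.getD (w.length - 1) 0 := by
  have hlt : w.length - 1 < w.length := by have := List.length_pos_iff.mpr h; omega
  rw [List.getD_eq_getElem _ _ hlt]
  apply List.getLast!_of_getLast?
  rw [List.getLast?_eq_getElem?, List.getElem?_eq_getElem hlt]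
lemma wplus_getD (w : List ℕ) (h : w ≠ []) {i : ℕ} (hi : i < w.length) :
    (wplus w).getD i 0 = if i = w.length - 1 then w.getD i 0 + 1 else w.getD i 0 := by
  have hd : w.dropLast.length = w.length - 1 := List.length_dropLast
  by_cases hc : i = w.length - 1
  · rw [wplus, List.getD_append_right _ _ _ _ (by omega), if_pos hc]
    rw [hd, hc, Nat.sub_self, getLast!_eq_getD w h]
    simp
  · have hi' : i < w.dropLast.length := by have := List.length_pos_iff.mpr h; omega
    rw [wplus, List.getD_append _ _ _ _ hi', if_neg hc]
    rw [List.getD_eq_getElem _ _ hi', List.getD_eq_getElem _ _ hi]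
    exact List.getElem_dropLast hi'

lemma pred_mod (L t : ℕ) (hL : 1 ≤ L) (ht : 1 ≤ t) :
    (t - 1) % L = if t % L = 0 then L - 1 else t % L - 1 := by
  have hr : t % L < L := Nat.mod_lt _ hL
  have h1 : (t - 1) % L = (t - 1 + L) % L := (Nat.add_mod_right _ _).symm
  have h2 : t - 1 + L = t + (L - 1) := by omega
  rw [h1, h2, Nat.add_mod]
  have hL1 : (L - 1) % L = L - 1 := Nat.mod_eq_of_lt (by omega)
  rw [hL1]
  by_cases h0 : t % L = 0
  · rw [if_pos h0, h0, Nat.zero_add, hL1]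
  · rw [if_neg h0]
    have h3 : t % L + (L - 1) = L + (t % L - 1) := by omega
    rw [h3, Nat.add_mod_left]
    exact Nat.mod_eq_of_lt (by omega)

lemma mod_two_mul (t L pos : ℕ) (hL : 1 ≤ L) (hpos : pos < 2) :
    (2*t + pos) % (2*L) = 2*(t % L) + pos := by
  have hr : t % L < L := Nat.mod_lt _ hL
  rw [Nat.add_mod, Nat.mul_mod_mul_left, Nat.mod_eq_of_lt (show pos < 2*L by omega)]
  exact Nat.mod_eq_of_lt (by omega)

lemma lamSeq_even {M : ℕ} (hME : M % 2 = 0) (i : ℕ) :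
    lamSeq M i = (M/2 + tau (i+1)) - tau i := by
  simp [lamSeq, lam, hME]
lemma lamSeq_odd {M : ℕ} (hMO : M % 2 = 1) (i : ℕ) :
    lamSeq M i = M/2 + tau (i+1) := by
  simp [lamSeq, lam, hMO]

lemma phi_even {M : ℕ} (hME : M % 2 = 0) (hM : 1 ≤ M) (b : ℕ → ℕ) (hb : ∀ i, b i ≤ 1)
    (j : ℕ) :
    phiInvSeq M (unitLift M) b j = (M/2 + b j) - (if j = 0 then 0 else b (j-1)) := by
  have hM2 : 2 ≤ M := by omega
  have hMk : M / 2 + M / 2 = M := by omega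
  have hw : wplus [M/2] = [M/2 + 1] := by simp [wplus, List.getLast!_cons_eq_getLastD]
  simp only [phiInvSeq, unitLift, if_pos hME, List.length_singleton, Nat.div_one, Nat.mod_one]
  rcases Nat.le_one_iff_eq_zero_or_eq_one.mp (hb j) with hc|hc <;>
    rcases Nat.le_one_iff_eq_zero_or_eq_one.mp
      (show (if j = 0 then 0 else b (j-1)) ≤ 1 by split; omega; exact hb _) with hp|hp <;>
    rw [hc, hp] <;> simp [block, hw, reflW] <;> omega

lemma phi_odd {M : ℕ} (hMO : M % 2 = 1) (b : ℕ → ℕ) (hb : ∀ i, b i ≤ 1) (j : ℕ) :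
    phiInvSeq M (unitLift M) b j =
      if j % 2 = 0 then (M/2 + 1) - (if j / 2 = 0 then 0 else b (j/2 - 1))
      else M/2 + b (j/2) := by
  have hMk : 2 * (M / 2) + 1 = M := by omega
  have hw : wplus [M/2+1, M/2] = [M/2+1, M/2+1] := by simp [wplus, List.getLast!_cons_eq_getLastD]
  simp only [phiInvSeq, unitLift, if_neg (show ¬ M % 2 = 0 by omega)]
  have hlen : ([M/2+1, M/2] : List ℕ).length = 2 := rfl
  rw [hlen]
  have hj2 : j % 2 = 0 ∨ j % 2 = 1 := by omega
  rcases Nat.le_one_iff_eq_zero_or_eq_one.mp (hb (j/2)) with hc|hc <;>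
    rcases Nat.le_one_iff_eq_zero_or_eq_one.mp
      (show (if j / 2 = 0 then 0 else b (j/2 - 1)) ≤ 1 by split; omega; exact hb _) with hp|hp <;>
    rw [hc, hp] <;>
    rcases hj2 with h2|h2 <;>
    simp [block, hw, reflW, h2] <;> omega

lemma alphaQn_one (n j : ℕ) :
    alphaQn 1 n j = if j < 2^n then tau (j+1)
      else if (j - 2^n) % 2^n = 2^n - 1 then 1 else 1 - tau ((j - 2^n) % 2^n + 1) := by
  have hL1 : (1:ℕ) ≤ 2^n := Nat.one_le_two_pow
  have hsel : (if (1:ℕ) % 2 = 0 then 2^(n-1) else 2^n) = 2^n := if_neg (by norm_num)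
  simp only [alphaQn, hsel]
  set w := pref (lamSeq 1) (2^n) with hwdef
  have hwl : w.length = 2^n := pref_length _ _
  have hwne : w ≠ [] := pref_ne_nil _ (by omega)
  have hrne : reflW 1 w ≠ [] := reflW_ne_nil _ hwne
  have hvl : (wplus (reflW 1 w)).length = 2^n := by
    rw [wplus_length _ hrne, reflW_length, hwl]
  simp only [wordThenPer, hwl, hvl]
  by_cases hj : j < 2^n
  · rw [if_pos hj, if_pos hj, hwdef, pref_getD _ hj, lamSeq_odd (by norm_num)]
    norm_num
  · rw [if_neg hj, if_neg hj]
    set r := (j - 2^n) % 2^n with hrdef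
    have hr : r < 2^n := Nat.mod_lt _ (by positivity)
    rw [wplus_getD _ hrne (by rw [reflW_length, hwl]; exact hr)]
    rw [reflW_length, hwl]
    rw [reflW_getD _ _ (by rw [hwl]; exact hr), hwdef, pref_getD _ hr,
      lamSeq_odd (by norm_num)]
    norm_num
    by_cases hre : r = 2^n - 1
    · rw [if_pos hre, if_pos hre, hre, show 2^n - 1 + 1 = 2^n by omega, tau_pow]
    · rw [if_neg hre, if_neg hre]

lemma alphaQn_one_le (n j : ℕ) : alphaQn 1 n j ≤ 1 := by
  rw [alphaQn_one]
  split
  · exact tau_le _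
  · split
    · omega
    · omega

lemma alphaQn_even {M : ℕ} (hME : M % 2 = 0) (hM : 1 ≤ M) (n j : ℕ) :
    alphaQn M (n+1) j = if j < 2^n then (M/2 + tau (j+1)) - tau j
      else if (j - 2^n) % 2^n = 2^n - 1 then M/2 + tau (2^n - 1)
      else (M/2 + tau ((j - 2^n) % 2^n)) - tau ((j - 2^n) % 2^n + 1) := by
  have hM2 : 2 ≤ M := by omega
  have hL1 : (1:ℕ) ≤ 2^n := Nat.one_le_two_pow
  have hsel : (if M % 2 = 0 then 2^((n+1)-1) else 2^(n+1)) = 2^n := by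
    rw [if_pos hME]; norm_num
  simp only [alphaQn, hsel]
  set w := pref (lamSeq M) (2^n) with hwdef
  have hwl : w.length = 2^n := pref_length _ _
  have hwne : w ≠ [] := pref_ne_nil _ (by omega)
  have hrne : reflW M w ≠ [] := reflW_ne_nil _ hwne
  have hvl : (wplus (reflW M w)).length = 2^n := by
    rw [wplus_length _ hrne, reflW_length, hwl]
  simp only [wordThenPer, hwl, hvl]
  by_cases hj : j < 2^n
  · rw [if_pos hj, if_pos hj, hwdef, pref_getD _ hj, lamSeq_even hME]
  · rw [if_neg hj, if_neg hj]
    set r := (j - 2^n) % 2^n with hrdef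
    have hr : r < 2^n := Nat.mod_lt _ (by positivity)
    rw [wplus_getD _ hrne (by rw [reflW_length, hwl]; exact hr)]
    rw [reflW_length, hwl]
    rw [reflW_getD _ _ (by rw [hwl]; exact hr), hwdef, pref_getD _ hr, lamSeq_even hME]
    have ht1 := tau_le r
    have ht2 := tau_le (r+1)
    by_cases hre : r = 2^n - 1
    · rw [if_pos hre, if_pos hre, hre, show 2^n - 1 + 1 = 2^n by omega, tau_pow]
      have := tau_le (2^n - 1)
      omega
    · rw [if_neg hre, if_neg hre]
      omega

lemma alphaQn_odd {M : ℕ} (hMO : M % 2 = 1) (n j : ℕ) :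
    alphaQn M (n+1) j = if j < 2^(n+1) then M/2 + tau (j+1)
      else if (j - 2^(n+1)) % 2^(n+1) = 2^(n+1) - 1 then M/2 + 1
      else (M/2 + 1) - tau ((j - 2^(n+1)) % 2^(n+1) + 1) := by
  have hL1 : (1:ℕ) ≤ 2^(n+1) := Nat.one_le_two_pow
  have hMk : 2 * (M / 2) + 1 = M := by omega
  have hsel : (if M % 2 = 0 then 2^((n+1)-1) else 2^(n+1)) = 2^(n+1) := if_neg (by omega)
  simp only [alphaQn, hsel]
  set w := pref (lamSeq M) (2^(n+1)) with hwdef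
  have hwl : w.length = 2^(n+1) := pref_length _ _
  have hwne : w ≠ [] := pref_ne_nil _ (by omega)
  have hrne : reflW M w ≠ [] := reflW_ne_nil _ hwne
  have hvl : (wplus (reflW M w)).length = 2^(n+1) := by
    rw [wplus_length _ hrne, reflW_length, hwl]
  simp only [wordThenPer, hwl, hvl]
  by_cases hj : j < 2^(n+1)
  · rw [if_pos hj, if_pos hj, hwdef, pref_getD _ hj, lamSeq_odd hMO]
  · rw [if_neg hj, if_neg hj]
    set r := (j - 2^(n+1)) % 2^(n+1) with hrdef
    have hr : r < 2^(n+1) := Nat.mod_lt _ (by positivity)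
    rw [wplus_getD _ hrne (by rw [reflW_length, hwl]; exact hr)]
    rw [reflW_length, hwl]
    rw [reflW_getD _ _ (by rw [hwl]; exact hr), hwdef, pref_getD _ hr, lamSeq_odd hMO]
    have ht2 := tau_le (r+1)
    by_cases hre : r = 2^(n+1) - 1
    · rw [if_pos hre, if_pos hre, hre, show 2^(n+1) - 1 + 1 = 2^(n+1) by omega, tau_pow]
      omega
    · rw [if_neg hre, if_neg hre]
      omega

/-- Φ_{u_M}⁻¹((τ_i)) = (λ_i), and for each n ≥ 1,
Φ_{u_M}⁻¹(α*(q_n'(1))) = α(q_{n+1}'(M)). -/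
theorem statement9 (M : ℕ) (hM : 1 ≤ M) :
    phiInvSeq M (unitLift M) tauSeq = lamSeq M ∧
    ∀ n : ℕ, 1 ≤ n → phiInvSeq M (unitLift M) (alphaQn 1 n) = alphaQn M (n + 1) := by
  constructor
  · funext j
    by_cases hME : M % 2 = 0
    · rw [phi_even hME hM tauSeq (fun i => tau_le _), lamSeq_even hME]
      simp only [tauSeq]
      by_cases h0 : j = 0
      · subst h0
        rw [if_pos rfl, tau_zero]
      · rw [if_neg h0, show j - 1 + 1 = j by omega]
    · have hMO : M % 2 = 1 := by omega
      rw [phi_odd hMO tauSeq (fun i => tau_le _), lamSeq_odd hMO]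
      simp only [tauSeq]
      by_cases h2 : j % 2 = 0
      · obtain ⟨m, rfl⟩ : ∃ m, j = 2*m := ⟨j/2, by omega⟩
        rw [if_pos h2, show 2*m/2 = m by omega, tau_two_mul_add_one]
        have htm := tau_le m
        by_cases hm0 : m = 0
        · subst hm0
          rw [if_pos rfl, tau_zero]
          omega
        · rw [if_neg hm0, show m - 1 + 1 = m by omega]
          omega
      · obtain ⟨m, rfl⟩ : ∃ m, j = 2*m+1 := ⟨j/2, by omega⟩
        rw [if_neg h2, show (2*m+1)/2 = m by omega,
          show 2*m+1+1 = 2*(m+1) by ring, tau_two_mul]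
  · intro n hn
    funext j
    have hb := alphaQn_one_le n
    have hL1 : (1:ℕ) ≤ 2^n := Nat.one_le_two_pow
    have hL2 : (2:ℕ) ≤ 2^n := by
      calc (2:ℕ) = 2^1 := (pow_one 2).symm
      _ ≤ 2^n := Nat.pow_le_pow_right (by norm_num) hn
    by_cases hME : M % 2 = 0
    · -- even case
      have hk1 : 1 ≤ M/2 := by omega
      rw [phi_even hME hM _ hb j, alphaQn_even hME hM n j, alphaQn_one n j]
      rcases lt_trichotomy j (2^n) with hj|hj|hj
      · rw [if_pos hj, if_pos hj]
        by_cases h0 : j = 0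
        · subst h0
          rw [if_pos rfl, tau_zero]
        · rw [if_neg h0, alphaQn_one n (j-1), if_pos (by omega : j - 1 < 2^n),
            show j - 1 + 1 = j by omega]
      · subst hj
        have hr0 : (2^n - 2^n) % 2^n = 0 := by rw [Nat.sub_self, Nat.zero_mod]
        rw [if_neg (lt_irrefl _), if_neg (lt_irrefl _), hr0,
          if_neg (show ¬ (0:ℕ) = 2^n - 1 by omega), if_neg (show ¬ (0:ℕ) = 2^n - 1 by omega),
          if_neg (show ¬ 2^n = 0 by omega), alphaQn_one n (2^n - 1),
          if_pos (show 2^n - 1 < 2^n by omega), show 2^n - 1 + 1 = 2^n by omega, tau_pow]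
        simp only [Nat.zero_add]
        rw [tau_zero, tau_one]
      · rw [if_neg (by omega : ¬ j < 2^n), if_neg (by omega : ¬ j < 2^n),
          if_neg (show ¬ j = 0 by omega), alphaQn_one n (j-1),
          if_neg (show ¬ j - 1 < 2^n by omega)]
        have hr : (j - 2^n) % 2^n < 2^n := Nat.mod_lt _ (by positivity)
        have hrp : (j - 1 - 2^n) % 2^n =
            if (j - 2^n) % 2^n = 0 then 2^n - 1 else (j - 2^n) % 2^n - 1 := by
          rw [show j - 1 - 2^n = (j - 2^n) - 1 by omega,
            pred_mod _ _ (by omega) (by omega)]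
        by_cases hr0 : (j - 2^n) % 2^n = 0
        · have hrp2 : (j - 1 - 2^n) % 2^n = 2^n - 1 := by rw [hrp, if_pos hr0]
          rw [hrp2, if_pos rfl]
          have h1 : ¬ ((j - 2^n) % 2^n = 2^n - 1) := by omega
          simp only [if_neg h1]
          rw [hr0]
          simp only [Nat.zero_add]
          rw [tau_zero, tau_one]
        · have hrp2 : (j - 1 - 2^n) % 2^n = (j - 2^n) % 2^n - 1 := by rw [hrp, if_neg hr0]
          rw [hrp2, if_neg (show ¬ ((j - 2^n) % 2^n - 1 = 2^n - 1) by omega),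
            show (j - 2^n) % 2^n - 1 + 1 = (j - 2^n) % 2^n by omega]
          have ht1 := tau_le ((j - 2^n) % 2^n)
          have ht2 := tau_le ((j - 2^n) % 2^n + 1)
          by_cases hre : (j - 2^n) % 2^n = 2^n - 1
          · simp only [if_pos hre]
            rw [← hre]
            omega
          · simp only [if_neg hre]
            omega
    · -- odd case
      have hMO : M % 2 = 1 := by omega
      rw [phi_odd hMO _ hb j, alphaQn_odd hMO n j]
      have h2L : (2:ℕ)^(n+1) = 2 * 2^n := by ring
      rw [h2L]
      by_cases h2 : j % 2 = 0
      · obtain ⟨m, rfl⟩ : ∃ m, j = 2*m := ⟨j/2, by omega⟩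
        rw [if_pos h2, show 2*m/2 = m by omega]
        by_cases hm : m < 2^n
        · rw [if_pos (by omega : 2*m < 2*2^n), tau_two_mul_add_one]
          have htm := tau_le m
          by_cases hm0 : m = 0
          · subst hm0
            rw [if_pos rfl, tau_zero]
            omega
          · rw [if_neg hm0, alphaQn_one n (m-1), if_pos (by omega : m - 1 < 2^n),
              show m - 1 + 1 = m by omega]
            omega
        · rw [if_neg (by omega : ¬ 2*m < 2*2^n)]
          have hs : (m - 2^n) % 2^n < 2^n := Nat.mod_lt _ (by positivity)
          have hjr : (2*m - 2*2^n) % (2*2^n) = 2*((m - 2^n) % 2^n) := by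
            rw [show 2*m - 2*2^n = 2*(m - 2^n) + 0 by omega,
              mod_two_mul _ _ 0 (by omega) (by omega)]
            omega
          rw [hjr, if_neg (show ¬ 2*((m - 2^n) % 2^n) = 2*2^n - 1 by omega),
            show 2*((m - 2^n) % 2^n) + 1 = 2*((m - 2^n) % 2^n) + 1 from rfl,
            tau_two_mul_add_one, if_neg (show ¬ m = 0 by omega), alphaQn_one n (m-1)]
          have hts := tau_le ((m - 2^n) % 2^n)
          by_cases hmL : m = 2^n
          · have hs0 : (m - 2^n) % 2^n = 0 := by rw [hmL, Nat.sub_self, Nat.zero_mod]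
            rw [if_pos (by omega : m - 1 < 2^n), show m - 1 + 1 = m by omega, hs0,
              tau_zero, hmL, tau_pow]
          · rw [if_neg (by omega : ¬ m - 1 < 2^n)]
            have hsp : (m - 1 - 2^n) % 2^n =
                if (m - 2^n) % 2^n = 0 then 2^n - 1 else (m - 2^n) % 2^n - 1 := by
              rw [show m - 1 - 2^n = (m - 2^n) - 1 by omega,
                pred_mod _ _ (by omega) (by omega)]
            by_cases hs0 : (m - 2^n) % 2^n = 0
            · have hsp2 : (m - 1 - 2^n) % 2^n = 2^n - 1 := by rw [hsp, if_pos hs0]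
              rw [hsp2, if_pos rfl, hs0, tau_zero]
            · have hsp2 : (m - 1 - 2^n) % 2^n = (m - 2^n) % 2^n - 1 := by
                rw [hsp, if_neg hs0]
              rw [hsp2, if_neg (show ¬ ((m - 2^n) % 2^n - 1 = 2^n - 1) by omega),
                show (m - 2^n) % 2^n - 1 + 1 = (m - 2^n) % 2^n by omega]
      · obtain ⟨m, rfl⟩ : ∃ m, j = 2*m+1 := ⟨j/2, by omega⟩
        rw [if_neg h2, show (2*m+1)/2 = m by omega, alphaQn_one n m]
        by_cases hm : m < 2^n
        · rw [if_pos hm, if_pos (by omega : 2*m+1 < 2*2^n),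
            show 2*m+1+1 = 2*(m+1) by ring, tau_two_mul]
        · rw [if_neg hm, if_neg (by omega : ¬ 2*m+1 < 2*2^n)]
          have hs : (m - 2^n) % 2^n < 2^n := Nat.mod_lt _ (by positivity)
          have hjr : (2*m+1 - 2*2^n) % (2*2^n) = 2*((m - 2^n) % 2^n) + 1 := by
            rw [show 2*m+1 - 2*2^n = 2*(m - 2^n) + 1 by omega,
              mod_two_mul _ _ 1 (by omega) (by omega)]
          rw [hjr]
          by_cases hse : (m - 2^n) % 2^n = 2^n - 1
          · rw [if_pos hse, if_pos (show 2*((m - 2^n) % 2^n) + 1 = 2*2^n - 1 by omega)]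
          · rw [if_neg hse, if_neg (show ¬ (2*((m - 2^n) % 2^n) + 1 = 2*2^n - 1) by omega),
              show 2*((m - 2^n) % 2^n)+1+1 = 2*((m - 2^n) % 2^n + 1) by ring, tau_two_mul]
            have := tau_le ((m - 2^n) % 2^n + 1)
            omega
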